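/- Let d ≥ c ≥ 2, and let X be an edge-signed (c,d)-biregular bipartite graph with m constraint vertices of degree c, n variable vertices of degree d, e = cm = dn edges, and signed incidence matrix N ∈ ℝ^{m×n}. Let B be the 2e × 2e signed non-backtracking matrix of X. Then the characteristic polynomial of B factors as det(x·I_{2e} − B) = (x² − 1)^{e−m−n} · (x² + (c−1))^{m−n} · det( (x⁴ + (c+d−2)·x² + (c−1)(d−1))·I_n − x²·NᵀN ). In particular, B has eigenvalues ±1 with multiplicity e−(m+n) each, ±i√(c−1) with multiplicity m−n each, and for each eigenvalue λ² of NᵀN the four roots of u⁴ + ((c−1)+(d−1)−λ²)u² + (c−1)(d−1). -/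

import Mathlib

open scoped Matrix
open Polynomial Matrix

/-- The signed non-backtracking matrix of an edge-signed `(c,d)`-biregular bipartite
graph with signed incidence matrix `N` (rows = constraint vertices, columns =
variable vertices).  Directed edges: `Sum.inl e` is the arc from constraint `e.1`
to variable `e.2`, and `Sum.inr e` is the arc from variable `e.2` to constraint
`e.1`; both carry the sign `N e.1 e.2`. -/
def signedNB {m n : ℕ} (N : Matrix (Fin m) (Fin n) ℤ) :
    Matrix ({p : Fin m × Fin n // N p.1 p.2 ≠ 0} ⊕ {p : Fin m × Fin n // N p.1 p.2 ≠ 0})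
      ({p : Fin m × Fin n // N p.1 p.2 ≠ 0} ⊕ {p : Fin m × Fin n // N p.1 p.2 ≠ 0}) ℤ :=
  fun e f =>
  match e, f with
  | Sum.inl e, Sum.inr f =>
      if f.val.2 = e.val.2 ∧ f.val.1 ≠ e.val.1 then N e.val.1 e.val.2 else 0
  | Sum.inr e, Sum.inl f =>
      if f.val.1 = e.val.1 ∧ f.val.2 ≠ e.val.2 then N e.val.1 e.val.2 else 0
  | _, _ => 0

namespace Stmt5

variable {m n : ℕ} (N : Matrix (Fin m) (Fin n) ℤ)

abbrev E (N : Matrix (Fin m) (Fin n) ℤ) : Type := {p : Fin m × Fin n // N p.1 p.2 ≠ 0}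

def Pm : Matrix (E N ⊕ E N) (Fin m ⊕ Fin n) ℤ := fun a w =>
  match a, w with
  | Sum.inl e, Sum.inr v => if e.val.2 = v then N e.val.1 e.val.2 else 0
  | Sum.inr e, Sum.inl i => if e.val.1 = i then N e.val.1 e.val.2 else 0
  | _, _ => 0

def Qm : Matrix (E N ⊕ E N) (Fin m ⊕ Fin n) ℤ := fun a w =>
  match a, w with
  | Sum.inl e, Sum.inl i => if e.val.1 = i then 1 else 0
  | Sum.inr e, Sum.inr v => if e.val.2 = v then 1 else 0
  | _, _ => 0

def Jm : Matrix (E N ⊕ E N) (E N ⊕ E N) ℤ := fun a b =>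
  match a, b with
  | Sum.inl e, Sum.inr f => if e = f then N e.val.1 e.val.2 else 0
  | Sum.inr e, Sum.inl f => if e = f then N e.val.1 e.val.2 else 0
  | _, _ => 0

variable {N}

lemma sum_E (f : Fin m × Fin n → ℤ) (hf : ∀ p, N p.1 p.2 = 0 → f p = 0) :
    ∑ e : E N, f e.val = ∑ p : Fin m × Fin n, f p := by
  rw [← Finset.sum_subtype (Finset.univ.filter fun p : Fin m × Fin n => N p.1 p.2 ≠ 0)
    (by simp) f]
  refine Finset.sum_subset (Finset.filter_subset _ _) ?_
  intro p _ hp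
  simp only [Finset.mem_filter, Finset.mem_univ, true_and, not_not] at hp
  exact hf p hp

lemma eqE {e f : E N} (h2 : e.val.2 = f.val.2) (h1 : e.val.1 = f.val.1) : e = f := by
  apply Subtype.ext; exact Prod.ext h1 h2

lemma hB : signedNB N = Pm N * (Qm N)ᵀ - Jm N := by
  ext a b
  rcases a with e | e <;> rcases b with f | f <;>
    simp only [signedNB, Matrix.sub_apply, Matrix.mul_apply, Matrix.transpose_apply,
      Fintype.sum_sum_type, Pm, Qm, Jm] <;>
    simp only [mul_ite, mul_one, mul_zero, ite_mul, zero_mul, one_mul, Finset.sum_ite_eq,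
      Finset.mem_univ, if_true, Finset.sum_const_zero, add_zero, zero_add, sub_zero, ite_self,
      sub_self]
  · rcases eq_or_ne e f with rfl | hef
    · simp
    · rw [if_neg hef, sub_zero]
      by_cases h2 : e.val.2 = f.val.2
      · rw [if_pos h2, if_pos ⟨h2.symm, fun h1 => hef (eqE h2 h1.symm)⟩]
      · rw [if_neg h2, if_neg (fun h => h2 h.1.symm)]
  · rcases eq_or_ne e f with rfl | hef
    · simp
    · rw [if_neg hef, sub_zero]
      by_cases h1 : e.val.1 = f.val.1
      · rw [if_pos h1, if_pos ⟨h1.symm, fun h2 => hef (eqE h2.symm h1)⟩]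
      · rw [if_neg h1, if_neg (fun h => h1 h.1.symm)]

variable (hsq : ∀ e : E N, N e.val.1 e.val.2 * N e.val.1 e.val.2 = 1)

include hsq in
lemma hJJ : Jm N * Jm N = 1 := by
  ext a b
  rcases a with e | e <;> rcases b with f | f <;>
    simp only [Matrix.mul_apply, Fintype.sum_sum_type, Jm, Matrix.one_apply,
      mul_ite, mul_one, mul_zero, ite_mul, zero_mul, one_mul, Finset.sum_const_zero,
      add_zero, zero_add, Sum.inl.injEq, Sum.inr.injEq, reduceCtorEq, if_false, ite_self,
      Finset.sum_ite_eq, Finset.sum_ite_eq', Finset.mem_univ, if_true] <;>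
  · rcases eq_or_ne e f with rfl | hef
    · simp [hsq e]
    · simp [hef]

include hsq in
lemma hJP : Jm N * Pm N = Qm N := by
  ext a w
  rcases a with e | e <;> rcases w with i | v <;>
    simp only [Matrix.mul_apply, Fintype.sum_sum_type, Jm, Pm, Qm,
      mul_ite, mul_one, mul_zero, ite_mul, zero_mul, one_mul, Finset.sum_const_zero,
      add_zero, zero_add, ite_self, Finset.sum_ite_eq, Finset.sum_ite_eq',
      Finset.mem_univ, if_true] <;>
  first
  | rfl
  | (rw [Finset.sum_eq_single e (fun g _ hg => by simp [Ne.symm hg]) (by simp)]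
     simp [hsq e])

lemma hQP : (Qm N)ᵀ * Pm N = Matrix.fromBlocks 0 N Nᵀ 0 := by
  ext w w'
  rcases w with i | v <;> rcases w' with i' | v' <;>
    simp only [Matrix.mul_apply, Fintype.sum_sum_type, Matrix.transpose_apply, Pm, Qm,
      Matrix.fromBlocks_apply₁₁, Matrix.fromBlocks_apply₁₂, Matrix.fromBlocks_apply₂₁,
      Matrix.fromBlocks_apply₂₂, mul_ite, mul_one, mul_zero, ite_mul, zero_mul, one_mul,
      Finset.sum_const_zero, add_zero, zero_add, Matrix.zero_apply, ite_self]
  · rw [sum_E (fun p => if p.2 = v' then if p.1 = i then N p.1 p.2 else 0 else 0)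
      (by intro p hp; split_ifs <;> simp [hp])]
    rw [Fintype.sum_prod_type]
    simp [Finset.sum_ite_eq', Finset.sum_ite_eq]
  · rw [sum_E (fun p => if p.1 = i' then if p.2 = v then N p.1 p.2 else 0 else 0)
      (by intro p hp; split_ifs <;> simp [hp])]
    rw [Fintype.sum_prod_type]
    simp [Finset.sum_ite_eq', Finset.sum_ite_eq, Matrix.transpose_apply]

variable {c d : ℕ}
  (hrow : ∀ i, (Finset.univ.filter fun j => N i j ≠ 0).card = c)
  (hcol : ∀ j, (Finset.univ.filter fun i => N i j ≠ 0).card = d)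

include hrow in
lemma row_sum (i : Fin m) : ∑ e : E N, (if e.val.1 = i then (1:ℤ) else 0) = c := by
  rw [← Finset.sum_subtype (Finset.univ.filter fun p : Fin m × Fin n => N p.1 p.2 ≠ 0)
    (by simp) (fun p => if p.1 = i then (1:ℤ) else 0)]
  rw [Finset.sum_filter, Fintype.sum_prod_type]
  have : ∀ a : Fin m, (∑ j : Fin n, if N a j ≠ 0 then (if a = i then (1:ℤ) else 0) else 0)
      = if a = i then ((Finset.univ.filter fun j => N a j ≠ 0).card : ℤ) else 0 := by
    intro a
    split_ifs with h
    · simp only [h, Finset.sum_boole]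
    · simp [h]
  simp only [this]
  rw [Finset.sum_ite_eq' Finset.univ]
  simp [hrow i]

include hcol in
lemma col_sum (v : Fin n) : ∑ e : E N, (if e.val.2 = v then (1:ℤ) else 0) = d := by
  rw [← Finset.sum_subtype (Finset.univ.filter fun p : Fin m × Fin n => N p.1 p.2 ≠ 0)
    (by simp) (fun p => if p.2 = v then (1:ℤ) else 0)]
  rw [Finset.sum_filter, Fintype.sum_prod_type_right]
  have : ∀ a : Fin n, (∑ i : Fin m, if N i a ≠ 0 then (if a = v then (1:ℤ) else 0) else 0)
      = if a = v then ((Finset.univ.filter fun i => N i a ≠ 0).card : ℤ) else 0 := by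
    intro a
    split_ifs with h
    · simp only [h, Finset.sum_boole]
    · simp [h]
  simp only [this]
  rw [Finset.sum_ite_eq' Finset.univ]
  simp [hcol v]

include hrow hcol in
lemma hQQ : (Qm N)ᵀ * Qm N
    = Matrix.fromBlocks ((c:ℤ) • 1) 0 0 ((d:ℤ) • 1) := by
  ext w w'
  rcases w with i | v <;> rcases w' with i' | v' <;>
    simp only [Matrix.mul_apply, Fintype.sum_sum_type, Matrix.transpose_apply, Qm,
      Matrix.fromBlocks_apply₁₁, Matrix.fromBlocks_apply₁₂, Matrix.fromBlocks_apply₂₁,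
      Matrix.fromBlocks_apply₂₂, mul_ite, mul_one, mul_zero, ite_mul, zero_mul, one_mul,
      Finset.sum_const_zero, add_zero, zero_add, Matrix.zero_apply, ite_self,
      Matrix.smul_apply, Matrix.one_apply, smul_ite, smul_zero, smul_eq_mul]
  · rcases eq_or_ne i i' with rfl | hii
    · simp only [if_pos rfl, mul_one]
      calc (∑ e : E N, if (e:Fin m × Fin n).1 = i then (if (e:Fin m × Fin n).1 = i then (1:ℤ) else 0) else 0)
          = ∑ e : E N, (if (e:Fin m × Fin n).1 = i then (1:ℤ) else 0) := by
            apply Finset.sum_congr rfl; intro e _; split_ifs <;> rfl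
        _ = c := row_sum hrow i
    · rw [if_neg hii]
      rw [Finset.sum_eq_zero]
      intro e _
      split_ifs with h1 h2
      · exact absurd (h2.symm.trans h1) hii
      · rfl
      · rfl
  · rcases eq_or_ne v v' with rfl | hvv
    · simp only [if_pos rfl, mul_one]
      calc (∑ e : E N, if (e:Fin m × Fin n).2 = v then (if (e:Fin m × Fin n).2 = v then (1:ℤ) else 0) else 0)
          = ∑ e : E N, (if (e:Fin m × Fin n).2 = v then (1:ℤ) else 0) := by
            apply Finset.sum_congr rfl; intro e _; split_ifs <;> rfl
        _ = d := col_sum hcol v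
    · rw [if_neg hvv]
      rw [Finset.sum_eq_zero]
      intro e _
      split_ifs with h1 h2
      · exact absurd (h2.symm.trans h1) hvv
      · rfl
      · rfl

include hrow in
lemma cardE : Fintype.card (E N) = c * m := by
  rw [Fintype.card_subtype]
  have : (Finset.univ.filter fun p : Fin m × Fin n => N p.1 p.2 ≠ 0).card
      = ∑ i : Fin m, (Finset.univ.filter fun j => N i j ≠ 0).card := by
    rw [Finset.card_filter, Fintype.sum_prod_type]
    exact Finset.sum_congr rfl fun i _ => (Finset.card_filter _ _).symm
  rw [this]
  simp [hrow, mul_comm]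

section Field
variable {F : Type*} [Field F] {ι κ : Type*} [Fintype ι] [Fintype κ]
  [DecidableEq ι] [DecidableEq κ]

lemma key (x : F) (hx : x ^ 2 - 1 ≠ 0) (P Q : Matrix ι κ F) (J B : Matrix ι ι F)
    (hB : B = P * Qᵀ - J) (hJJ : J * J = 1) (hJP : J * P = Q) :
    (x • 1 - B).det
      = (x • 1 + J).det * (1 - (x ^ 2 - 1)⁻¹ • (x • (Qᵀ * P) - Qᵀ * Q)).det := by
  set M : Matrix ι ι F := x • 1 + J with hM
  have h1 : M * (x • 1 - J) = (x ^ 2 - 1) • 1 := by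
    simp only [hM, mul_sub, add_mul, smul_mul_assoc, mul_smul_comm, one_mul, mul_one,
      hJJ, smul_add, smul_smul, sub_smul, one_smul, ← pow_two]
    abel
  have hMinv : M * ((x ^ 2 - 1)⁻¹ • (x • 1 - J)) = 1 := by
    rw [Matrix.mul_smul, h1, smul_smul, inv_mul_cancel₀ hx, one_smul]
  set Minv : Matrix ι ι F := (x ^ 2 - 1)⁻¹ • (x • 1 - J) with hMinvdef
  have h2 : x • 1 - B = M * (1 - Minv * (P * Qᵀ)) := by
    rw [mul_sub, mul_one, ← mul_assoc, hMinv, one_mul, hB, hM]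
    abel
  have h3 : Minv * P = (x ^ 2 - 1)⁻¹ • (x • P - Q) := by
    simp only [hMinvdef, Matrix.smul_mul, Matrix.sub_mul, Matrix.smul_mul, Matrix.one_mul, hJP]
  have h4 : Qᵀ * (Minv * P) = (x ^ 2 - 1)⁻¹ • (x • (Qᵀ * P) - Qᵀ * Q) := by
    simp only [h3, Matrix.mul_smul, Matrix.mul_sub]
  rw [h2, Matrix.det_mul]
  congr 1
  have h5 : (1 : Matrix ι ι F) - Minv * (P * Qᵀ) = 1 + (-(Minv * P)) * Qᵀ := by
    rw [Matrix.neg_mul, ← Matrix.mul_assoc]; abel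
  rw [h5, Matrix.det_one_add_mul_comm, Matrix.mul_neg, ← sub_eq_add_neg, h4]

lemma schur {a b : Type*} [Fintype a] [Fintype b] [DecidableEq a] [DecidableEq b]
    (α : F) (hα : α ≠ 0) (B' : Matrix a b F) (C' : Matrix b a F) (D' : Matrix b b F) :
    (Matrix.fromBlocks (α • 1) B' C' D').det
      = α ^ Fintype.card a * (D' - α⁻¹ • (C' * B')).det := by
  letI : Invertible (α • (1 : Matrix a a F)) :=
    ⟨α⁻¹ • 1, by rw [smul_mul_smul_comm, inv_mul_cancel₀ hα, one_mul, one_smul],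
      by rw [smul_mul_smul_comm, mul_inv_cancel₀ hα, one_mul, one_smul]⟩
  rw [Matrix.det_fromBlocks₁₁]
  have h1 : ⅟(α • (1 : Matrix a a F)) = α⁻¹ • 1 :=
    invOf_eq_right_inv (by rw [smul_mul_smul_comm, mul_inv_cancel₀ hα, one_mul, one_smul])
  rw [h1]
  simp only [Matrix.det_smul, Matrix.det_one, mul_one, Matrix.mul_smul, Matrix.smul_mul,
    Matrix.mul_one]

end Field

def arcEquiv (N : Matrix (Fin m) (Fin n) ℤ) : (E N ⊕ E N) ≃ (Fin 2 × E N) where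
  toFun a := Sum.elim (fun e => ((0 : Fin 2), e)) (fun e => ((1 : Fin 2), e)) a
  invFun p := if p.1 = 0 then Sum.inl p.2 else Sum.inr p.2
  left_inv a := by rcases a with e | e <;> simp
  right_inv p := by rcases p with ⟨i, e⟩; fin_cases i <;> simp

lemma detM {F : Type*} [Field F] (ψ : ℤ →+* F) (x : F)
    (hsq : ∀ e : E N, N e.val.1 e.val.2 * N e.val.1 e.val.2 = 1) :
    (x • 1 + (Jm N).map ψ).det = (x ^ 2 - 1) ^ Fintype.card (E N) := by
  have hE : x • (1 : Matrix (E N ⊕ E N) (E N ⊕ E N) F) + (Jm N).map ψ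
      = (Matrix.blockDiagonal (fun e : E N =>
          !![x, ψ (N e.val.1 e.val.2); ψ (N e.val.1 e.val.2), x])).submatrix
          (arcEquiv N) (arcEquiv N) := by
    ext a b
    rcases a with e | e <;> rcases b with f | f <;>
      rcases eq_or_ne e f with rfl | hef <;>
      simp [Matrix.submatrix_apply, Matrix.blockDiagonal_apply, arcEquiv, Jm,
        Matrix.map_apply, Matrix.one_apply, Matrix.smul_apply] <;>
      simp [hef]
  rw [hE, Matrix.det_submatrix_equiv_self, Matrix.det_blockDiagonal]
  have : ∀ e : E N, (!![x, ψ (N e.val.1 e.val.2); ψ (N e.val.1 e.val.2), x]).det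
      = x ^ 2 - 1 := by
    intro e
    rw [Matrix.det_fin_two_of, ← _root_.map_mul, hsq e, _root_.map_one, sq]
  simp only [this, Finset.prod_const, Finset.card_univ]

end Stmt5

open Stmt5 in
set_option maxHeartbeats 2000000 in
/-- For an edge-signed `(c,d)`-biregular bipartite graph (`d ≥ c ≥ 2`) with `m`
constraint vertices, `n` variable vertices and `e = cm = dn` edges, the
characteristic polynomial of the signed non-backtracking matrix `B` factors as
`(X²-1)^(e-m-n) · (X²+(c-1))^(m-n) · det((X⁴+(c+d-2)X²+(c-1)(d-1))·1 - X²·NᵀN)`. -/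
theorem stmt_5 (c d m n : ℕ) (hc : 2 ≤ c) (hcd : c ≤ d) (hm : 1 ≤ m) (hn : 1 ≤ n)
    (hbal : c * m = d * n)
    (N : Matrix (Fin m) (Fin n) ℤ)
    (hentries : ∀ i j, N i j = -1 ∨ N i j = 0 ∨ N i j = 1)
    (hrow : ∀ i, (Finset.univ.filter fun j => N i j ≠ 0).card = c)
    (hcol : ∀ j, (Finset.univ.filter fun i => N i j ≠ 0).card = d) :
    (signedNB N).charpoly
      = (Polynomial.X ^ 2 - 1) ^ (c * m - m - n)
          * (Polynomial.X ^ 2 + Polynomial.C ((c : ℤ) - 1)) ^ (m - n)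
          * Matrix.det
              ((Polynomial.X ^ 4 + Polynomial.C ((c : ℤ) + d - 2) * Polynomial.X ^ 2
                  + Polynomial.C (((c : ℤ) - 1) * ((d : ℤ) - 1)))
                  • (1 : Matrix (Fin n) (Fin n) (Polynomial ℤ))
                - (Polynomial.X ^ 2 : Polynomial ℤ) • (Nᵀ * N).map Polynomial.C) := by
  classical
  set K := FractionRing (Polynomial ℤ) with hK
  set φ : Polynomial ℤ →+* K := (algebraMap (Polynomial ℤ) K : Polynomial ℤ →+* K) with hφdef
  have hφ : Function.Injective φ := IsFractionRing.injective _ _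
  apply hφ
  set ψ : ℤ →+* K := φ.comp (Int.castRingHom (Polynomial ℤ)) with hψdef
  set x : K := φ Polynomial.X with hxdef
  have hφC : ∀ a : ℤ, φ (Polynomial.C a) = ψ a := by
    intro a
    rw [hψdef, RingHom.comp_apply]
    norm_num [Polynomial.C_eq_intCast]
  -- basic nonvanishing facts
  have hx2 : x ^ 2 - 1 ≠ 0 := by
    have h0 : (Polynomial.X ^ 2 - 1 : Polynomial ℤ) ≠ 0 := by
      intro h
      have := congrArg (Polynomial.eval 0) h
      simp at this
    intro h
    apply h0
    apply hφ
    rw [map_sub, map_pow, _root_.map_one, _root_.map_zero]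
    exact h
  set α : K := x ^ 2 - 1 + ψ (c : ℤ) with hαdef
  have hα : α ≠ 0 := by
    have h0 : (Polynomial.X ^ 2 - 1 + Polynomial.C (c:ℤ) : Polynomial ℤ) ≠ 0 := by
      intro h
      have := congrArg (Polynomial.eval 0) h
      simp at this
      omega
    intro h
    apply h0
    apply hφ
    rw [map_add, map_sub, map_pow, _root_.map_one, _root_.map_zero, hφC]
    exact h
  -- edge squared signs
  have hsq : ∀ e : E N, N e.val.1 e.val.2 * N e.val.1 e.val.2 = 1 := by
    intro e
    rcases hentries e.val.1 e.val.2 with h | h | h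
    · rw [h]; ring
    · exact absurd h e.prop
    · rw [h]; ring
  -- mapped matrices
  set PK := (Pm N).map ψ with hPK
  set QK := (Qm N).map ψ with hQK
  set JK := (Jm N).map ψ with hJK
  set NK := N.map ψ with hNK
  have hmap1 : (1 : Matrix (E N ⊕ E N) (E N ⊕ E N) ℤ).map ψ = 1 :=
    Matrix.map_one _ (_root_.map_zero ψ) (_root_.map_one ψ)
  have hBK : (signedNB N).map ψ = PK * QKᵀ - JK := by
    rw [hB, Matrix.map_sub _ (_root_.map_sub ψ), hPK, hQK, hJK, ← Matrix.transpose_map,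
      Matrix.map_mul]
  have hJJK : JK * JK = 1 := by
    rw [hJK, ← Matrix.map_mul, hJJ hsq, hmap1]
  have hJPK : JK * PK = QK := by
    rw [hJK, hPK, ← Matrix.map_mul, hJP hsq]
  have hQPK : QKᵀ * PK = Matrix.fromBlocks 0 NK NKᵀ 0 := by
    rw [hQK, hPK, ← Matrix.transpose_map, ← Matrix.map_mul, hQP,
      Matrix.fromBlocks_map, ← Matrix.transpose_map]
    congr 1 <;> simp [Matrix.map_zero]
  have hQQK : QKᵀ * QK = Matrix.fromBlocks (ψ (c:ℤ) • 1) 0 0 (ψ (d:ℤ) • 1) := by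
    rw [hQK, ← Matrix.transpose_map, ← Matrix.map_mul, hQQ hrow hcol]
    ext w w'
    rcases w with i | v <;> rcases w' with i' | v' <;>
      simp [Matrix.map_apply, Matrix.fromBlocks_apply₁₁, Matrix.fromBlocks_apply₁₂,
        Matrix.fromBlocks_apply₂₁, Matrix.fromBlocks_apply₂₂, Matrix.smul_apply,
        Matrix.one_apply, apply_ite ψ]
    all_goals simp_all [← Matrix.diagonal_natCast, Matrix.diagonal_apply, apply_ite ψ]
  -- the charpoly, mapped
  have hcm : φ (signedNB N).charpoly = (x • 1 - (signedNB N).map ψ).det := by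
    rw [Matrix.charpoly, RingHom.map_det]
    congr 1
    ext a b
    by_cases hab : a = b
    · subst hab
      simp [Matrix.charmatrix_apply_eq, Matrix.sub_apply, Matrix.smul_apply,
        Matrix.one_apply, Matrix.map_apply, hφC, map_sub, hxdef]
    · simp [Matrix.charmatrix_apply_ne _ _ _ hab, Matrix.sub_apply, Matrix.smul_apply,
        Matrix.one_apply, hab, Matrix.map_apply, hφC]
  rw [hcm, hBK]
  rw [key x hx2 PK QK JK _ rfl hJJK hJPK]
  rw [hJK, detM ψ x hsq, cardE hrow]
  -- adjacency/degree reduction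
  have hW : (1 : Matrix (Fin m ⊕ Fin n) (Fin m ⊕ Fin n) K)
        - (x ^ 2 - 1)⁻¹ • (x • (QKᵀ * PK) - QKᵀ * QK)
      = (x ^ 2 - 1)⁻¹ • Matrix.fromBlocks (α • 1) (-(x • NK)) (-(x • NKᵀ))
          ((x ^ 2 - 1 + ψ (d : ℤ)) • 1) := by
    rw [hQPK, hQQK]
    have h1 : (1 : Matrix (Fin m ⊕ Fin n) (Fin m ⊕ Fin n) K)
        = (x ^ 2 - 1)⁻¹ • ((x ^ 2 - 1) • (1 : Matrix (Fin m ⊕ Fin n) (Fin m ⊕ Fin n) K)) := by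
      rw [smul_smul, inv_mul_cancel₀ hx2, one_smul]
    rw [h1, ← smul_sub]
    congr 1
    ext w w'
    rcases w with i | v <;> rcases w' with i' | v' <;>
      simp [Matrix.fromBlocks_apply₁₁, Matrix.fromBlocks_apply₁₂, Matrix.fromBlocks_apply₂₁,
        Matrix.fromBlocks_apply₂₂, Matrix.sub_apply, Matrix.smul_apply, Matrix.one_apply,
        Matrix.neg_apply, hαdef, smul_eq_mul] <;>
      split_ifs <;> ring
  rw [hW, Matrix.det_smul]
  rw [schur α hα (-(x • NK)) (-(x • NKᵀ)) ((x ^ 2 - 1 + ψ (d : ℤ)) • 1)]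
  have hprod : (-(x • NKᵀ)) * (-(x • NK)) = (x ^ 2) • (NKᵀ * NK) := by
    rw [Matrix.neg_mul, Matrix.mul_neg, neg_neg, Matrix.smul_mul, Matrix.mul_smul,
      smul_smul, ← sq]
  rw [hprod]
  have hfin : ((x ^ 2 - 1 + ψ (d : ℤ)) • (1 : Matrix (Fin n) (Fin n) K)
        - α⁻¹ • ((x ^ 2) • (NKᵀ * NK)))
      = α⁻¹ • ((α * (x ^ 2 - 1 + ψ (d : ℤ))) • 1 - (x ^ 2) • (NKᵀ * NK)) := by
    rw [smul_sub, smul_smul, smul_smul, inv_mul_cancel_left₀ hα]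
  rw [hfin, Matrix.det_smul]
  -- now the right-hand side
  have hNN : NKᵀ * NK = (Nᵀ * N).map ψ := by
    rw [hNK, ← Matrix.transpose_map, ← Matrix.map_mul]
  have hpoly : (Polynomial.X ^ 2 - 1 + Polynomial.C (c : ℤ))
        * (Polynomial.X ^ 2 - 1 + Polynomial.C (d : ℤ))
      = Polynomial.X ^ 4 + Polynomial.C ((c : ℤ) + d - 2) * Polynomial.X ^ 2
          + Polynomial.C (((c : ℤ) - 1) * ((d : ℤ) - 1)) := by
    simp only [Polynomial.C_sub, Polynomial.C_add, Polynomial.C_mul, Polynomial.C_1,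
      map_ofNat]
    ring
  have hxc : x ^ 2 - 1 + ψ (c : ℤ)
      = φ (Polynomial.X ^ 2 - 1 + Polynomial.C (c : ℤ)) := by
    rw [_root_.map_add, _root_.map_sub, map_pow, _root_.map_one, hφC]
  have hxd : x ^ 2 - 1 + ψ (d : ℤ)
      = φ (Polynomial.X ^ 2 - 1 + Polynomial.C (d : ℤ)) := by
    rw [_root_.map_add, _root_.map_sub, map_pow, _root_.map_one, hφC]
  have hq : α * (x ^ 2 - 1 + ψ (d : ℤ))
      = φ (Polynomial.X ^ 4 + Polynomial.C ((c : ℤ) + d - 2) * Polynomial.X ^ 2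
          + Polynomial.C (((c : ℤ) - 1) * ((d : ℤ) - 1))) := by
    rw [hαdef, hxc, hxd, ← _root_.map_mul, hpoly]
  have hRmap : ((Polynomial.X ^ 4 + Polynomial.C ((c : ℤ) + d - 2) * Polynomial.X ^ 2
        + Polynomial.C (((c : ℤ) - 1) * ((d : ℤ) - 1)))
        • (1 : Matrix (Fin n) (Fin n) (Polynomial ℤ))
        - (Polynomial.X ^ 2 : Polynomial ℤ) • (Nᵀ * N).map Polynomial.C).map φ
      = (α * (x ^ 2 - 1 + ψ (d : ℤ))) • 1 - (x ^ 2) • (NKᵀ * NK) := by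
    rw [hNN, hq]
    ext i j
    simp only [Matrix.map_apply, Matrix.sub_apply, Matrix.smul_apply, Matrix.one_apply,
      smul_eq_mul, _root_.map_sub, _root_.map_mul, map_pow, hφC, apply_ite φ, mul_ite, mul_zero, mul_one,
      _root_.map_zero, _root_.map_one, ← hxdef]
  have hαeq : φ (Polynomial.X ^ 2 + Polynomial.C ((c : ℤ) - 1)) = α := by
    have h : (Polynomial.X ^ 2 + Polynomial.C ((c : ℤ) - 1) : Polynomial ℤ)
        = Polynomial.X ^ 2 - 1 + Polynomial.C (c : ℤ) := by
      rw [Polynomial.C_sub, Polynomial.C_1]; ring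
    rw [h, ← hxc, hαdef]
  have hx2eq : φ (Polynomial.X ^ 2 - 1) = x ^ 2 - 1 := by
    rw [_root_.map_sub, map_pow, _root_.map_one]
  rw [_root_.map_mul, _root_.map_mul, map_pow, map_pow, RingHom.map_det, hαeq, hx2eq]
  have hdetmap : (φ.mapMatrix ((Polynomial.X ^ 4 + Polynomial.C ((c : ℤ) + d - 2) * Polynomial.X ^ 2
        + Polynomial.C (((c : ℤ) - 1) * ((d : ℤ) - 1)))
        • (1 : Matrix (Fin n) (Fin n) (Polynomial ℤ))
        - (Polynomial.X ^ 2 : Polynomial ℤ) • (Nᵀ * N).map Polynomial.C)).det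
      = ((α * (x ^ 2 - 1 + ψ (d : ℤ))) • 1 - (x ^ 2) • (NKᵀ * NK)).det := by
    rw [← hRmap]; rfl
  rw [hdetmap]
  -- arithmetic of exponents
  have hnm : n ≤ m := by nlinarith
  have hmn : m + n ≤ c * m := by nlinarith
  have e1 : c * m - m - n = c * m - (m + n) := by omega
  rw [e1, pow_sub₀ _ hx2 hmn, pow_sub₀ _ hα hnm]
  simp only [Fintype.card_sum, Fintype.card_fin]
  rw [inv_pow, inv_pow]
  ring
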